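/- Let G be a group and A = ⊕_{g∈G} A_g a G-graded unital *-algebra over ℂ whose unit fibre A_e is commutative. Equip the set Â_e of characters of A_e with the topology of pointwise convergence, and let Â_e⁺ ⊆ Â_e be the subset of positive characters. For g ∈ G put 𝒟_{g⁻¹} := {χ ∈ Â_e⁺ : χ(a* a) ≠ 0 for some a ∈ A_g}, and for χ ∈ 𝒟_{g⁻¹} let ϑ_g(χ) be the positive character x ↦ χ(b* x b)/χ(b* b), for any b ∈ A_g with χ(b* b) ≠ 0 (this is independent of the choice of b). Then: (i) Â_e⁺ is a closed subset of Â_e; (ii) each 𝒟_{g⁻¹} is an open subset of Â_e⁺; (iii) ϑ_g maps 𝒟_{g⁻¹} into 𝒟_g, with ϑ_e the identity map of Â_e⁺ and ϑ_{g⁻¹}(ϑ_g(χ)) = χ for all χ ∈ 𝒟_{g⁻¹}; (iv) ϑ_g : 𝒟_{g⁻¹} → 𝒟_g is a homeomorphism with inverse ϑ_{g⁻¹}. Thus the maps ϑ_g form a partial action of G on Â_e⁺ by partial homeomorphisms. -/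

import Mathlib

/-- A `G`-graded unital `⋆`-algebra over `ℂ`: a direct sum decomposition
`A = ⊕_{g ∈ G} A_g` into subspaces with `A_g · A_h ⊆ A_{gh}`, `(A_g)* = A_{g⁻¹}` and
`1 ∈ A_e`. -/
structure GradedStarAlgebra (G : Type*) [Group G]
    (A : Type*) [Ring A] [Algebra ℂ A] [StarRing A] [StarModule ℂ A] where
  fiber : G → Submodule ℂ A
  mul_mem' : ∀ {g h : G} {a b : A}, a ∈ fiber g → b ∈ fiber h → a * b ∈ fiber (g * h)
  star_mem' : ∀ {g : G} {a : A}, a ∈ fiber g → star a ∈ fiber g⁻¹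
  one_mem' : (1 : A) ∈ fiber 1
  decompose' : ∀ a : A, ∃ (F : Finset G) (c : G → A),
    (∀ g : G, c g ∈ fiber g) ∧ a = ∑ g ∈ F, c g
  independent' : ∀ (F : Finset G) (c : G → A), (∀ g : G, c g ∈ fiber g) →
    ∑ g ∈ F, c g = 0 → ∀ g ∈ F, c g = 0

namespace GradedStarAlgebra

variable {G : Type*} [Group G]
variable {A : Type*} [Ring A] [Algebra ℂ A] [StarRing A] [StarModule ℂ A]
variable (S : GradedStarAlgebra G A)

/-- The element `a* a` of the unit fibre `A_e`, for `a ∈ A_g`. -/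
def sq {g : G} {a : A} (ha : a ∈ S.fiber g) : ↥(S.fiber 1) :=
  ⟨star a * a, by simpa using S.mul_mem' (S.star_mem' ha) ha⟩

/-- The element `b* x b` of the unit fibre `A_e`, for `b ∈ A_g` and `x ∈ A_e`. -/
def sandwich {g : G} {b : A} (hb : b ∈ S.fiber g) {x : A} (hx : x ∈ S.fiber 1) :
    ↥(S.fiber 1) :=
  ⟨star b * x * b, by simpa using S.mul_mem' (S.mul_mem' (S.star_mem' hb) hx) hb⟩

/-- A character of the unit fibre `A_e`: a unital, multiplicative, `ℂ`-linear,
`⋆`-preserving functional on `A_e`. -/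
def IsCharOn (χ : ↥(S.fiber 1) → ℂ) : Prop :=
  χ ⟨1, S.one_mem'⟩ = 1 ∧
  (∀ (x y : ↥(S.fiber 1)) (hxy : (x : A) * (y : A) ∈ S.fiber 1),
    χ ⟨(x : A) * (y : A), hxy⟩ = χ x * χ y) ∧
  (∀ (x y : ↥(S.fiber 1)) (hxy : (x : A) + (y : A) ∈ S.fiber 1),
    χ ⟨(x : A) + (y : A), hxy⟩ = χ x + χ y) ∧
  (∀ (c : ℂ) (x : ↥(S.fiber 1)) (hcx : c • (x : A) ∈ S.fiber 1),
    χ ⟨c • (x : A), hcx⟩ = c * χ x) ∧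
  (∀ (x : ↥(S.fiber 1)) (hsx : star (x : A) ∈ S.fiber 1),
    χ ⟨star (x : A), hsx⟩ = starRingEnd ℂ (χ x))

/-- A positive character of the unit fibre: `χ (a* a) ≥ 0` for all `a ∈ A_g`, `g ∈ G`. -/
def IsPosChar (χ : ↥(S.fiber 1) → ℂ) : Prop :=
  S.IsCharOn χ ∧ ∀ (g : G) (a : A) (ha : a ∈ S.fiber g),
    0 ≤ (χ (S.sq ha)).re ∧ (χ (S.sq ha)).im = 0

/-- The set `Â_e` of characters, inside the space of all functions `A_e → ℂ` with the
topology of pointwise convergence. -/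
def charSet : Set (↥(S.fiber 1) → ℂ) := {χ | S.IsCharOn χ}

/-- The set `Â_e⁺` of positive characters. -/
def posCharSet : Set (↥(S.fiber 1) → ℂ) := {χ | S.IsPosChar χ}

/-- The set `𝒟_{g⁻¹} = {χ ∈ Â_e⁺ : χ (a* a) ≠ 0 for some a ∈ A_g}`, the domain of the partial
homeomorphism `ϑ_g`. -/
def transDom (g : G) : Set (↥(S.fiber 1) → ℂ) :=
  {χ | S.IsPosChar χ ∧ ∃ (a : A) (ha : a ∈ S.fiber g), χ (S.sq ha) ≠ 0}

end GradedStarAlgebra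

open GradedStarAlgebra
open Topology Filter

variable {G : Type*} [Group G]
variable {A : Type*} [Ring A] [Algebra ℂ A] [StarRing A] [StarModule ℂ A]

private lemma ccongr {S : GradedStarAlgebra G A} (χ : ↥(S.fiber 1) → ℂ)
    {x y : ↥(S.fiber 1)} (h : (x : A) = (y : A)) : χ x = χ y :=
  congrArg χ (Subtype.ext h)

private lemma div_real {z w : ℂ} (hz : 0 ≤ z.re ∧ z.im = 0) (hw : 0 ≤ w.re ∧ w.im = 0) :
    0 ≤ (z / w).re ∧ (z / w).im = 0 := by
  have hz' : z = (z.re : ℂ) := Complex.ext rfl (by simp [hz.2])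
  have hw' : w = (w.re : ℂ) := Complex.ext rfl (by simp [hw.2])
  rw [hz', hw', ← Complex.ofReal_div]
  exact ⟨by simpa using div_nonneg hz.1 hw.1, by simp⟩

/-- The main computational lemma: for a positive character `χ` and `b ∈ A_g` with
`D := χ(b* b) ≠ 0`, the map `ψ : x ↦ χ(b* x b)/D` is a positive character,
`ψ((b*)* b*) = D`, and `χ(b* (b x b*) b)/D = D · χ x`. -/
private lemma theta_spec (S : GradedStarAlgebra G A)
    (hcomm : ∀ x ∈ S.fiber 1, ∀ y ∈ S.fiber 1, x * y = y * x)
    {g : G} {χ : ↥(S.fiber 1) → ℂ} (hχ : S.IsPosChar χ) {b : A} (hb : b ∈ S.fiber g)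
    (hD : χ (S.sq hb) ≠ 0) :
    S.IsPosChar (fun x => χ (S.sandwich hb x.2) / χ (S.sq hb)) ∧
    χ (S.sandwich hb (S.sq (S.star_mem' hb)).2) / χ (S.sq hb) = χ (S.sq hb) ∧
    (∀ x : ↥(S.fiber 1),
      χ (S.sandwich hb (S.sandwich (S.star_mem' hb) x.2).2) / χ (S.sq hb)
        = χ (S.sq hb) * χ x) := by
  obtain ⟨⟨h1, hm, had, hsm, hst⟩, hpos⟩ := hχ
  set D := χ (S.sq hb) with hDdef
  have hDre : 0 ≤ D.re ∧ D.im = 0 := hpos g b hb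
  -- b b* ∈ A_e
  have hc : b * star b ∈ S.fiber 1 := by simpa using S.mul_mem' hb (S.star_mem' hb)
  -- ψ (b b*) = D : used twice
  have hsqstar : χ (S.sandwich hb (S.sq (S.star_mem' hb)).2) = D * D := by
    have e : ((S.sandwich hb (S.sq (S.star_mem' hb)).2 : A))
        = (S.sq hb : A) * (S.sq hb : A) := by
      show star b * (star (star b) * star b) * b = (star b * b) * (star b * b)
      simp [star_star, mul_assoc]
    rw [ccongr χ (y := ⟨(S.sq hb : A) * (S.sq hb : A), by
        simpa using S.mul_mem' (S.sq hb).2 (S.sq hb).2⟩) e]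
    exact hm (S.sq hb) (S.sq hb) _
  have item2 : χ (S.sandwich hb (S.sq (S.star_mem' hb)).2) / D = D := by
    rw [hsqstar, mul_div_assoc, div_self hD, mul_one]
  have item3 : ∀ x : ↥(S.fiber 1),
      χ (S.sandwich hb (S.sandwich (S.star_mem' hb) x.2).2) / D = D * χ x := by
    intro x
    have e : ((S.sandwich hb (S.sandwich (S.star_mem' hb) x.2).2 : A))
        = ((S.sq hb : A) * (x : A)) * (S.sq hb : A) := by
      show star b * (star (star b) * (x : A) * star b) * b
          = ((star b * b) * (x : A)) * (star b * b)
      simp [star_star, mul_assoc]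
    have m1 : (S.sq hb : A) * (x : A) ∈ S.fiber 1 := by
      simpa using S.mul_mem' (S.sq hb).2 x.2
    have m2 : ((S.sq hb : A) * (x : A)) * (S.sq hb : A) ∈ S.fiber 1 := by
      simpa using S.mul_mem' m1 (S.sq hb).2
    rw [ccongr χ (y := ⟨((S.sq hb : A) * (x : A)) * (S.sq hb : A), m2⟩) e]
    have := hm ⟨(S.sq hb : A) * (x : A), m1⟩ (S.sq hb) m2
    rw [this, hm (S.sq hb) x m1]
    field_simp
    rw [← hDdef]; ring
  refine ⟨⟨⟨?_, ?_, ?_, ?_, ?_⟩, ?_⟩, item2, item3⟩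
  · -- unit
    show χ (S.sandwich hb S.one_mem') / D = 1
    have e : ((S.sandwich hb S.one_mem' : A)) = (S.sq hb : A) := by
      show star b * 1 * b = star b * b
      rw [mul_one]
    rw [ccongr χ (y := S.sq hb) e, div_self hD]
  · -- multiplicative
    intro x y hxy
    show χ (S.sandwich hb hxy) / D
        = χ (S.sandwich hb x.2) / D * (χ (S.sandwich hb y.2) / D)
    have h1 : b * (star b * (y : A)) = (y : A) * (b * star b) := by
      have h := hcomm _ hc _ y.2
      rwa [mul_assoc] at h
    have h2 : b * (star b * ((y : A) * b)) = (y : A) * (b * (star b * b)) := by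
      calc b * (star b * ((y : A) * b)) = (b * (star b * (y : A))) * b := by
            rw [mul_assoc, mul_assoc]
        _ = ((y : A) * (b * star b)) * b := by rw [h1]
        _ = (y : A) * (b * (star b * b)) := by rw [mul_assoc, mul_assoc]
    have E : ((S.sandwich hb hxy : A)) * (S.sq hb : A)
        = (S.sandwich hb x.2 : A) * (S.sandwich hb y.2 : A) := by
      show (star b * ((x : A) * (y : A)) * b) * (star b * b)
          = (star b * (x : A) * b) * (star b * (y : A) * b)
      simp only [mul_assoc]
      rw [h2]
    have key : χ (S.sandwich hb hxy) * D
        = χ (S.sandwich hb x.2) * χ (S.sandwich hb y.2) := by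
      have l := hm (S.sandwich hb hxy) (S.sq hb)
        (by simpa using S.mul_mem' (S.sandwich hb hxy).2 (S.sq hb).2)
      have r := hm (S.sandwich hb x.2) (S.sandwich hb y.2)
        (by simpa using S.mul_mem' (S.sandwich hb x.2).2 (S.sandwich hb y.2).2)
      calc χ (S.sandwich hb hxy) * D = χ ⟨_, _⟩ := l.symm
        _ = χ ⟨_, _⟩ := ccongr χ E
        _ = _ := r
    field_simp
    linear_combination key
  · -- additive
    intro x y hxy
    show χ (S.sandwich hb hxy) / D
        = χ (S.sandwich hb x.2) / D + χ (S.sandwich hb y.2) / D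
    have e : ((S.sandwich hb hxy : A))
        = (S.sandwich hb x.2 : A) + (S.sandwich hb y.2 : A) := by
      show star b * ((x : A) + (y : A)) * b = star b * (x : A) * b + star b * (y : A) * b
      rw [mul_add, add_mul]
    rw [ccongr χ (y := ⟨(S.sandwich hb x.2 : A) + (S.sandwich hb y.2 : A),
        Submodule.add_mem _ (S.sandwich hb x.2).2 (S.sandwich hb y.2).2⟩) e,
      had (S.sandwich hb x.2) (S.sandwich hb y.2) _, add_div]
  · -- scalar
    intro c x hcx
    show χ (S.sandwich hb hcx) / D = c * (χ (S.sandwich hb x.2) / D)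
    have e : ((S.sandwich hb hcx : A)) = c • (S.sandwich hb x.2 : A) := by
      show star b * (c • (x : A)) * b = c • (star b * (x : A) * b)
      rw [mul_smul_comm, smul_mul_assoc]
    rw [ccongr χ (y := ⟨c • (S.sandwich hb x.2 : A),
        Submodule.smul_mem _ c (S.sandwich hb x.2).2⟩) e,
      hsm c (S.sandwich hb x.2) _, mul_div_assoc]
  · -- star
    intro x hsx
    show χ (S.sandwich hb hsx) / D = starRingEnd ℂ (χ (S.sandwich hb x.2) / D)
    have hDc : starRingEnd ℂ D = D := Complex.conj_eq_iff_im.mpr hDre.2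
    have e : ((S.sandwich hb hsx : A)) = star ((S.sandwich hb x.2 : A)) := by
      show star b * star (x : A) * b = star (star b * (x : A) * b)
      simp [star_mul, star_star, mul_assoc]
    rw [ccongr χ (y := ⟨star ((S.sandwich hb x.2 : A)), by
        simpa using S.star_mem' (S.sandwich hb x.2).2⟩) e,
      hst (S.sandwich hb x.2) _, map_div₀, hDc]
  · -- positivity
    intro h a ha
    show 0 ≤ (χ (S.sandwich hb (S.sq ha).2) / D).re ∧
      (χ (S.sandwich hb (S.sq ha).2) / D).im = 0
    have hab : a * b ∈ S.fiber (h * g) := S.mul_mem' ha hb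
    have e : ((S.sandwich hb (S.sq ha).2 : A)) = (S.sq hab : A) := by
      show star b * (star a * a) * b = star (a * b) * (a * b)
      simp [star_mul, mul_assoc]
    rw [ccongr χ (y := S.sq hab) e]
    exact div_real (hpos _ _ hab) hDre

/-- **The partial action of `G` on the positive characters of the unit fibre.**
Let `A` be a `G`-graded unital `⋆`-algebra with commutative unit fibre `A_e`, and let
`θ g` realise the map `ϑ_g`, i.e. `θ g χ x = χ(b* x b)/χ(b* b)` whenever `b ∈ A_g` and
`χ(b* b) ≠ 0`.  Then: (i) `Â_e⁺` is closed in `Â_e`; (ii) each `𝒟_{g⁻¹}` is relatively open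
in `Â_e⁺`; (iii) `ϑ_g` maps `𝒟_{g⁻¹}` to `𝒟_g`, `ϑ_e = id`, and `ϑ_{g⁻¹} ∘ ϑ_g = id` on
`𝒟_{g⁻¹}`; (iv) `ϑ_g : 𝒟_{g⁻¹} → 𝒟_g` is a homeomorphism with inverse `ϑ_{g⁻¹}`:
its image is all of `𝒟_g` and it is continuous on `𝒟_{g⁻¹}`, as is its inverse.
Thus the maps `ϑ_g` form a partial action of `G` on `Â_e⁺` by partial homeomorphisms. -/
theorem partial_action_on_positive_characters (S : GradedStarAlgebra G A)
    (hcomm : ∀ x ∈ S.fiber 1, ∀ y ∈ S.fiber 1, x * y = y * x)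
    (θ : G → (↥(S.fiber 1) → ℂ) → (↥(S.fiber 1) → ℂ))
    (hθ : ∀ (g : G) (χ : ↥(S.fiber 1) → ℂ), χ ∈ S.posCharSet →
      ∀ (b : A) (hb : b ∈ S.fiber g), χ (S.sq hb) ≠ 0 →
        ∀ x : ↥(S.fiber 1), θ g χ x = χ (S.sandwich hb x.2) / χ (S.sq hb)) :
    -- (i) `Â_e⁺` is a closed subset of `Â_e`
    (closure (S.posCharSet) ∩ S.charSet ⊆ S.posCharSet) ∧
    -- (ii) each `𝒟_{g⁻¹}` is relatively open in `Â_e⁺`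
    (∀ g : G, ∃ U : Set (↥(S.fiber 1) → ℂ), IsOpen U ∧ S.transDom g = U ∩ S.posCharSet) ∧
    -- (iii) `ϑ_g (𝒟_{g⁻¹}) ⊆ 𝒟_g`, `ϑ_e = id`, and `ϑ_{g⁻¹} ∘ ϑ_g = id`
    (∀ g : G, ∀ χ ∈ S.transDom g, θ g χ ∈ S.transDom g⁻¹) ∧
    (∀ χ ∈ S.posCharSet, θ 1 χ = χ) ∧
    (∀ g : G, ∀ χ ∈ S.transDom g, θ g⁻¹ (θ g χ) = χ) ∧
    -- (iv) `ϑ_g : 𝒟_{g⁻¹} → 𝒟_g` is a homeomorphism with inverse `ϑ_{g⁻¹}`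
    (∀ g : G, θ g '' S.transDom g = S.transDom g⁻¹) ∧
    (∀ g : G, ContinuousOn (θ g) (S.transDom g)) := by
  have hiii : ∀ g : G, ∀ χ ∈ S.transDom g, θ g χ ∈ S.transDom g⁻¹ := by
    rintro g χ ⟨hχpos, b, hb, hD⟩
    have hspec := theta_spec S hcomm hχpos hb hD
    have hfun : θ g χ = fun x => χ (S.sandwich hb x.2) / χ (S.sq hb) :=
      funext (hθ g χ hχpos b hb hD)
    rw [hfun]
    exact ⟨hspec.1, star b, S.star_mem' hb, by
      show χ (S.sandwich hb (S.sq (S.star_mem' hb)).2) / χ (S.sq hb) ≠ 0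
      rw [hspec.2.1]; exact hD⟩
  have hinv : ∀ g : G, ∀ χ ∈ S.transDom g, θ g⁻¹ (θ g χ) = χ := by
    rintro g χ ⟨hχpos, b, hb, hD⟩
    have hspec := theta_spec S hcomm hχpos hb hD
    have hfun : θ g χ = fun x => χ (S.sandwich hb x.2) / χ (S.sq hb) :=
      funext (hθ g χ hχpos b hb hD)
    have hψpos : θ g χ ∈ S.posCharSet := by rw [hfun]; exact hspec.1
    have hψD : (θ g χ) (S.sq (S.star_mem' hb)) = χ (S.sq hb) := by
      rw [hfun]; exact hspec.2.1
    funext x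
    rw [hθ g⁻¹ (θ g χ) hψpos (star b) (S.star_mem' hb) (by rw [hψD]; exact hD) x,
      hψD, hfun]
    show χ (S.sandwich hb (S.sandwich (S.star_mem' hb) x.2).2) / χ (S.sq hb)
        / χ (S.sq hb) = χ x
    rw [hspec.2.2 x]
    exact mul_div_cancel_left₀ _ hD
  refine ⟨?_, ?_, hiii, ?_, hinv, ?_, ?_⟩
  · -- (i) closedness
    rintro χ ⟨hcl, hch⟩
    refine ⟨hch, ?_⟩
    intro g a ha
    have hsub : S.posCharSet ⊆ {χ' : ↥(S.fiber 1) → ℂ |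
        0 ≤ (χ' (S.sq ha)).re ∧ (χ' (S.sq ha)).im = 0} := fun χ' hχ' => hχ'.2 g a ha
    have hclosed : IsClosed {χ' : ↥(S.fiber 1) → ℂ |
        0 ≤ (χ' (S.sq ha)).re ∧ (χ' (S.sq ha)).im = 0} := by
      have h0 : IsClosed {z : ℂ | 0 ≤ z.re ∧ z.im = 0} :=
        (isClosed_le continuous_const Complex.continuous_re).inter
          (isClosed_eq Complex.continuous_im continuous_const)
      show IsClosed ((fun χ' : ↥(S.fiber 1) → ℂ => χ' (S.sq ha)) ⁻¹'
        {z : ℂ | 0 ≤ z.re ∧ z.im = 0})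
      exact h0.preimage (continuous_apply (S.sq ha))
    exact (closure_minimal hsub hclosed) hcl
  · -- (ii) relative openness
    intro g
    refine ⟨⋃ (a : A), ⋃ (ha : a ∈ S.fiber g), {χ | χ (S.sq ha) ≠ 0}, ?_, ?_⟩
    · exact isOpen_iUnion fun a => isOpen_iUnion fun ha =>
        isOpen_compl_singleton.preimage (continuous_apply (S.sq ha))
    · ext χ
      simp only [GradedStarAlgebra.transDom, Set.mem_setOf_eq, Set.mem_inter_iff,
        Set.mem_iUnion, GradedStarAlgebra.posCharSet]
      tauto
  · -- θ 1 = id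
    intro χ hχ
    have hD1 : χ (S.sq S.one_mem') = 1 := by
      rw [ccongr χ (y := ⟨1, S.one_mem'⟩) (by show star (1:A) * 1 = 1; simp)]
      exact hχ.1.1
    funext x
    rw [hθ 1 χ hχ 1 S.one_mem' (by rw [hD1]; exact one_ne_zero) x, hD1, div_one]
    exact ccongr χ (by show star (1:A) * (x:A) * 1 = (x:A); simp)
  · -- image
    intro g
    apply Set.eq_of_subset_of_subset
    · rintro ψ ⟨χ, hχ, rfl⟩; exact hiii g χ hχ
    · intro ψ hψ
      have h1 : θ g⁻¹ ψ ∈ S.transDom g := by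
        have h := hiii g⁻¹ ψ hψ; rwa [inv_inv] at h
      have h2 : θ g (θ g⁻¹ ψ) = ψ := by
        have h := hinv g⁻¹ ψ hψ; rwa [inv_inv] at h
      exact ⟨θ g⁻¹ ψ, h1, h2⟩
  · -- continuity
    rintro g χ ⟨hχpos, b, hb, hD⟩
    have hF : ContinuousAt (fun χ' : ↥(S.fiber 1) → ℂ =>
        fun x : ↥(S.fiber 1) => χ' (S.sandwich hb x.2) / χ' (S.sq hb)) χ := by
      rw [continuousAt_pi]
      intro x
      exact ((continuous_apply (S.sandwich hb x.2)).continuousAt).div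
        ((continuous_apply (S.sq hb)).continuousAt) hD
    have hV : {χ' : ↥(S.fiber 1) → ℂ | χ' (S.sq hb) ≠ 0} ∈ 𝓝[S.transDom g] χ :=
      mem_nhdsWithin_of_mem_nhds
        ((isOpen_compl_singleton.preimage (continuous_apply (S.sq hb))).mem_nhds hD)
    have hEq : θ g =ᶠ[𝓝[S.transDom g] χ] (fun χ' : ↥(S.fiber 1) → ℂ =>
        fun x : ↥(S.fiber 1) => χ' (S.sandwich hb x.2) / χ' (S.sq hb)) := by
      filter_upwards [hV, self_mem_nhdsWithin] with χ' h1 h2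
      exact funext (hθ g χ' h2.1 b hb h1)
    exact ContinuousWithinAt.congr_of_eventuallyEq hF.continuousWithinAt hEq
      (funext (hθ g χ hχpos b hb hD))
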